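/- Let Λ be a finite simple graph with vertices v_1, …, v_n and n ≥ 3, and let Γ'(Λ) be the graph of the second explicit construction. Then Γ'(Λ) has no non-trivial graph automorphisms, i.e., every adjacency-preserving bijection of its vertex set is the identity. -/

import Mathlib

open SimpleGraph
open scoped commutatorElement

/-- The set of commutator relations defining the right-angled Artin group of a graph. -/
def raagRels {V : Type} (G : SimpleGraph V) : Set (FreeGroup V) :=
  {r | ∃ v w : V, G.Adj v w ∧ r = ⁅FreeGroup.of v, FreeGroup.of w⁆}

/-- The right-angled Artin group of a graph `G`. -/
abbrev RAAG {V : Type} (G : SimpleGraph V) : Type := PresentedGroup (raagRels G)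

/-- The subgroup of inner automorphisms of a group. -/
def Inn (G : Type*) [Group G] : Subgroup (MulAut G) := (MulAut.conj (G := G)).range

instance Inn.normal (G : Type*) [Group G] : (Inn G).Normal := by
  constructor
  intro x hx φ
  obtain ⟨g, rfl⟩ := hx
  refine ⟨φ g, ?_⟩
  ext h
  simp [MulAut.conj, mul_assoc]

/-- The outer automorphism group of a group. -/
abbrev Out (G : Type*) [Group G] : Type _ := MulAut G ⧸ Inn G

/-- The group of pure symmetric automorphisms of the right-angled Artin group of `G`:
those automorphisms sending each generator to a conjugate of itself. -/
def PSA {V : Type} (G : SimpleGraph V) : Subgroup (MulAut (RAAG G)) where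
  carrier := {φ | ∀ v : V,
    IsConj (PresentedGroup.of (rels := raagRels G) v) (φ (PresentedGroup.of v))}
  one_mem' := fun _ => IsConj.refl _
  mul_mem' := by
    intro φ ψ hφ hψ v
    rw [MulAut.mul_apply]
    exact (hφ v).trans (φ.toMonoidHom.map_isConj (hψ v))
  inv_mem' := by
    intro φ hφ v
    have h := (φ⁻¹ : MulAut (RAAG G)).toMonoidHom.map_isConj (hφ v)
    simp only [MulEquiv.coe_toMonoidHom] at h
    have h2 : (φ⁻¹ : MulAut (RAAG G)) (φ (PresentedGroup.of v)) = PresentedGroup.of v := by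
      simp
    rw [h2] at h
    exact h.symm

/-- The group of pure symmetric outer automorphisms: the image of `PSA` in `Out`. -/
def PSO {V : Type} (G : SimpleGraph V) : Subgroup (Out (RAAG G)) :=
  (PSA G).map (QuotientGroup.mk' (Inn (RAAG G)))

/-- The star of a vertex: the vertex together with its neighbours. -/
def graphStar {V : Type} (G : SimpleGraph V) (v : V) : Set V := insert v (G.neighborSet v)

/-- `IsCompOf G s A` says that `A` is the vertex set of a connected component of the
induced subgraph of `G` on `s`. -/
def IsCompOf {V : Type} (G : SimpleGraph V) (s : Set V) (A : Set V) : Prop :=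
  ∃ a : s, A = {x : V | ∃ hx : x ∈ s, (SimpleGraph.induce s G).Reachable ⟨x, hx⟩ a}

/-- The support graph of `G` at a vertex `v`: vertices are the connected components of
`G - st(v)`, and two distinct components `A`, `B` are adjacent if there is `b ∈ B` such
that `A` is also a connected component of `G - st(b)`, or symmetrically. -/
def SupportGraph {V : Type} (G : SimpleGraph V) (v : V) :
    SimpleGraph {A : Set V // IsCompOf G (graphStar G v)ᶜ A} :=
  SimpleGraph.fromRel (fun A B => ∃ b ∈ B.1, IsCompOf G (graphStar G b)ᶜ A.1)

/-- A pair of distinct non-adjacent vertices `(v, w)` is a separating intersection of links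
if `G - (lk(v) ∩ lk(w))` has a connected component containing neither `v` nor `w`. -/
def SILPair {V : Type} (G : SimpleGraph V) (v w : V) : Prop :=
  v ≠ w ∧ ¬ G.Adj v w ∧
    ∃ A : Set V, IsCompOf G (G.neighborSet v ∩ G.neighborSet w)ᶜ A ∧ v ∉ A ∧ w ∉ A
/-- Vertices of the graph `Γ(Λ)`: the vertices of `Λ` (indexed by `Fin n`, with `v i`
denoting `v_{i+1}`) together with new vertices `a₁, a₂, b₁, b₂, c₁, …, c_n, d₁, d₂`. -/
inductive GV (n : ℕ) : Type where
  | v (i : Fin n)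
  | a1 | a2 | b1 | b2
  | c (i : Fin n)
  | d1 | d2
deriving DecidableEq

/-- The edge relation of the graph `Γ(Λ)` (to be symmetrized by `SimpleGraph.fromRel`). -/
def gammaRel {n : ℕ} (Λ : SimpleGraph (Fin n)) : GV n → GV n → Prop
  | .v i, .v j => Λ.Adj i j
  | .c i, .v j => j = i ∨ (j : ℕ) = ((i : ℕ) + 1) % n
  | .c _, .d1 => True
  | .c _, .d2 => True
  | .d1, .v j => (j : ℕ) = 0
  | .d1, .b1 => True
  | .d2, .v j => (j : ℕ) ≠ 0
  | .d2, .b2 => True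
  | .v _, .b1 => True
  | .v _, .b2 => True
  | .b1, .a1 => True
  | .b2, .a2 => True
  | .a1, .a2 => True
  | _, _ => False

/-- The graph `Γ(Λ)` of the explicit construction. -/
def GammaGraph {n : ℕ} (Λ : SimpleGraph (Fin n)) : SimpleGraph (GV n) :=
  SimpleGraph.fromRel (gammaRel Λ)

/-- Vertices of the graph `Γ'(Λ)`: the vertices of `Λ` (indexed by `Fin n`, with `v i`
denoting `v_{i+1}`) together with new vertices
`a₁, a₂, a₃, b₁, b₂, b₃, c₁, …, c_n, d₁, d₂, d₃`. -/
inductive GV' (n : ℕ) : Type where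
  | v (i : Fin n)
  | a1 | a2 | a3 | b1 | b2 | b3
  | c (i : Fin n)
  | d1 | d2 | d3
deriving DecidableEq

/-- The edge relation of the graph `Γ'(Λ)` (to be symmetrized by `SimpleGraph.fromRel`). -/
def gammaRel' {n : ℕ} (Λ : SimpleGraph (Fin n)) : GV' n → GV' n → Prop
  | .v i, .v j => Λ.Adj i j
  | .c i, .v j => j = i ∨ (j : ℕ) = ((i : ℕ) + 1) % n
  | .c _, .d1 => True
  | .c _, .d2 => True
  | .c _, .d3 => True
  | .d1, .v j => (j : ℕ) = 0
  | .d1, .b1 => True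
  | .d2, .v j => (j : ℕ) = 1
  | .d3, .v j => 2 ≤ (j : ℕ)
  | .d3, .b3 => True
  | .d2, .d3 => True
  | .v _, .b1 => True
  | .v _, .b2 => True
  | .v _, .b3 => True
  | .b1, .a1 => True
  | .b2, .a2 => True
  | .b3, .a3 => True
  | .a1, .a2 => True
  | .a1, .a3 => True
  | .a2, .a3 => True
  | _, _ => False

/-- The graph `Γ'(Λ)` of the second explicit construction. -/
def GammaGraph' {n : ℕ} (Λ : SimpleGraph (Fin n)) : SimpleGraph (GV' n) :=
  SimpleGraph.fromRel (gammaRel' Λ)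

namespace Gamma15

open GV'

variable {n : ℕ} {Λ : SimpleGraph (Fin n)}

lemma adj_iff (x y : GV' n) :
    (GammaGraph' Λ).Adj x y ↔ x ≠ y ∧ (gammaRel' Λ x y ∨ gammaRel' Λ y x) := Iff.rfl

lemma succ_mod (hn : 3 ≤ n) (j : Fin n) :
    ((j : ℕ) + 1) % n = if (j : ℕ) + 1 = n then 0 else (j : ℕ) + 1 := by
  have := j.isLt
  split_ifs with h
  · simp [h]
  · exact Nat.mod_eq_of_lt (by omega)

/-- `x` has eccentricity at most 2. -/
def Dom (Λ : SimpleGraph (Fin n)) (x : GV' n) : Prop :=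
  ∀ y, y ≠ x → (GammaGraph' Λ).Adj x y ∨
    ∃ z, (GammaGraph' Λ).Adj x z ∧ (GammaGraph' Λ).Adj z y

lemma dom_v (i : Fin n) : Dom Λ (.v i) := by
  intro y hy
  cases y with
  | v k => exact Or.inr ⟨.b1, by simp [adj_iff, gammaRel'], by simp [adj_iff, gammaRel']⟩
  | a1 => exact Or.inr ⟨.b1, by simp [adj_iff, gammaRel'], by simp [adj_iff, gammaRel']⟩
  | a2 => exact Or.inr ⟨.b2, by simp [adj_iff, gammaRel'], by simp [adj_iff, gammaRel']⟩
  | a3 => exact Or.inr ⟨.b3, by simp [adj_iff, gammaRel'], by simp [adj_iff, gammaRel']⟩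
  | b1 => exact Or.inl (by simp [adj_iff, gammaRel'])
  | b2 => exact Or.inl (by simp [adj_iff, gammaRel'])
  | b3 => exact Or.inl (by simp [adj_iff, gammaRel'])
  | c k =>
    by_cases h0 : (i : ℕ) = 0
    · exact Or.inr ⟨.d1, by simp [adj_iff, gammaRel', h0], by simp [adj_iff, gammaRel']⟩
    · by_cases h1 : (i : ℕ) = 1
      · exact Or.inr ⟨.d2, by simp [adj_iff, gammaRel', h1], by simp [adj_iff, gammaRel']⟩
      · exact Or.inr ⟨.d3, by simp [adj_iff, gammaRel']; omega, by simp [adj_iff, gammaRel']⟩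
  | d1 => exact Or.inr ⟨.c i, by simp [adj_iff, gammaRel'], by simp [adj_iff, gammaRel']⟩
  | d2 => exact Or.inr ⟨.c i, by simp [adj_iff, gammaRel'], by simp [adj_iff, gammaRel']⟩
  | d3 => exact Or.inr ⟨.c i, by simp [adj_iff, gammaRel'], by simp [adj_iff, gammaRel']⟩

lemma dom_b1 (hn : 3 ≤ n) : Dom Λ (.b1 : GV' n) := by
  intro y hy
  cases y with
  | v k => exact Or.inl (by simp [adj_iff, gammaRel'])
  | a1 => exact Or.inl (by simp [adj_iff, gammaRel'])
  | a2 => exact Or.inr ⟨.a1, by simp [adj_iff, gammaRel'], by simp [adj_iff, gammaRel']⟩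
  | a3 => exact Or.inr ⟨.a1, by simp [adj_iff, gammaRel'], by simp [adj_iff, gammaRel']⟩
  | b1 => exact absurd rfl hy
  | b2 => exact Or.inr ⟨.v ⟨0, by omega⟩, by simp [adj_iff, gammaRel'], by simp [adj_iff, gammaRel']⟩
  | b3 => exact Or.inr ⟨.v ⟨0, by omega⟩, by simp [adj_iff, gammaRel'], by simp [adj_iff, gammaRel']⟩
  | c k => exact Or.inr ⟨.d1, by simp [adj_iff, gammaRel'], by simp [adj_iff, gammaRel']⟩
  | d1 => exact Or.inl (by simp [adj_iff, gammaRel'])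
  | d2 => exact Or.inr ⟨.v ⟨1, by omega⟩, by simp [adj_iff, gammaRel'], by simp [adj_iff, gammaRel']⟩
  | d3 => exact Or.inr ⟨.v ⟨2, by omega⟩, by simp [adj_iff, gammaRel'], by simp [adj_iff, gammaRel']⟩

lemma dom_b2 (hn : 3 ≤ n) : Dom Λ (.b2 : GV' n) := by
  intro y hy
  cases y with
  | v k => exact Or.inl (by simp [adj_iff, gammaRel'])
  | a2 => exact Or.inl (by simp [adj_iff, gammaRel'])
  | a1 => exact Or.inr ⟨.a2, by simp [adj_iff, gammaRel'], by simp [adj_iff, gammaRel']⟩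
  | a3 => exact Or.inr ⟨.a2, by simp [adj_iff, gammaRel'], by simp [adj_iff, gammaRel']⟩
  | b2 => exact absurd rfl hy
  | b1 => exact Or.inr ⟨.v ⟨0, by omega⟩, by simp [adj_iff, gammaRel'], by simp [adj_iff, gammaRel']⟩
  | b3 => exact Or.inr ⟨.v ⟨0, by omega⟩, by simp [adj_iff, gammaRel'], by simp [adj_iff, gammaRel']⟩
  | c k => exact Or.inr ⟨.v k, by simp [adj_iff, gammaRel'], by simp [adj_iff, gammaRel']⟩
  | d1 => exact Or.inr ⟨.v ⟨0, by omega⟩, by simp [adj_iff, gammaRel'], by simp [adj_iff, gammaRel']⟩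
  | d2 => exact Or.inr ⟨.v ⟨1, by omega⟩, by simp [adj_iff, gammaRel'], by simp [adj_iff, gammaRel']⟩
  | d3 => exact Or.inr ⟨.v ⟨2, by omega⟩, by simp [adj_iff, gammaRel'], by simp [adj_iff, gammaRel']⟩

lemma dom_b3 (hn : 3 ≤ n) : Dom Λ (.b3 : GV' n) := by
  intro y hy
  cases y with
  | v k => exact Or.inl (by simp [adj_iff, gammaRel'])
  | a3 => exact Or.inl (by simp [adj_iff, gammaRel'])
  | a1 => exact Or.inr ⟨.a3, by simp [adj_iff, gammaRel'], by simp [adj_iff, gammaRel']⟩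
  | a2 => exact Or.inr ⟨.a3, by simp [adj_iff, gammaRel'], by simp [adj_iff, gammaRel']⟩
  | b3 => exact absurd rfl hy
  | b1 => exact Or.inr ⟨.v ⟨0, by omega⟩, by simp [adj_iff, gammaRel'], by simp [adj_iff, gammaRel']⟩
  | b2 => exact Or.inr ⟨.v ⟨0, by omega⟩, by simp [adj_iff, gammaRel'], by simp [adj_iff, gammaRel']⟩
  | c k => exact Or.inr ⟨.d3, by simp [adj_iff, gammaRel'], by simp [adj_iff, gammaRel']⟩
  | d1 => exact Or.inr ⟨.v ⟨0, by omega⟩, by simp [adj_iff, gammaRel'], by simp [adj_iff, gammaRel']⟩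
  | d2 => exact Or.inr ⟨.d3, by simp [adj_iff, gammaRel'], by simp [adj_iff, gammaRel']⟩
  | d3 => exact Or.inl (by simp [adj_iff, gammaRel'])

lemma not_dom_a1 (hn : 3 ≤ n) : ¬ Dom Λ (.a1 : GV' n) := by
  intro h
  rcases h (.c ⟨0, by omega⟩) (by simp) with hadj | ⟨z, h1, h2⟩
  · simp [adj_iff, gammaRel'] at hadj
  · cases z <;> simp [adj_iff, gammaRel'] at h1 h2

lemma not_dom_a2 (hn : 3 ≤ n) : ¬ Dom Λ (.a2 : GV' n) := by
  intro h
  rcases h (.c ⟨0, by omega⟩) (by simp) with hadj | ⟨z, h1, h2⟩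
  · simp [adj_iff, gammaRel'] at hadj
  · cases z <;> simp [adj_iff, gammaRel'] at h1 h2

lemma not_dom_a3 (hn : 3 ≤ n) : ¬ Dom Λ (.a3 : GV' n) := by
  intro h
  rcases h (.c ⟨0, by omega⟩) (by simp) with hadj | ⟨z, h1, h2⟩
  · simp [adj_iff, gammaRel'] at hadj
  · cases z <;> simp [adj_iff, gammaRel'] at h1 h2

lemma not_dom_c (i : Fin n) : ¬ Dom Λ (.c i) := by
  intro h
  rcases h .a1 (by simp) with hadj | ⟨z, h1, h2⟩
  · simp [adj_iff, gammaRel'] at hadj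
  · cases z <;> simp [adj_iff, gammaRel'] at h1 h2

lemma not_dom_d1 : ¬ Dom Λ (.d1 : GV' n) := by
  intro h
  rcases h .a2 (by simp) with hadj | ⟨z, h1, h2⟩
  · simp [adj_iff, gammaRel'] at hadj
  · cases z <;> simp [adj_iff, gammaRel'] at h1 h2

lemma not_dom_d2 : ¬ Dom Λ (.d2 : GV' n) := by
  intro h
  rcases h .a1 (by simp) with hadj | ⟨z, h1, h2⟩
  · simp [adj_iff, gammaRel'] at hadj
  · cases z <;> simp [adj_iff, gammaRel'] at h1 h2

lemma not_dom_d3 : ¬ Dom Λ (.d3 : GV' n) := by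
  intro h
  rcases h .a1 (by simp) with hadj | ⟨z, h1, h2⟩
  · simp [adj_iff, gammaRel'] at hadj
  · cases z <;> simp [adj_iff, gammaRel'] at h1 h2

/-- `x` is one of the `a` vertices: not dominating, with exactly two non-dominating
neighbours. -/
def InA (Λ : SimpleGraph (Fin n)) (x : GV' n) : Prop :=
  ¬ Dom Λ x ∧ ∃ y z, ¬ Dom Λ y ∧ ¬ Dom Λ z ∧ y ≠ z ∧
    (GammaGraph' Λ).Adj x y ∧ (GammaGraph' Λ).Adj x z ∧
    ∀ w, ¬ Dom Λ w → (GammaGraph' Λ).Adj x w → w = y ∨ w = z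

lemma inA_iff (hn : 3 ≤ n) (x : GV' n) :
    InA Λ x ↔ (x = .a1 ∨ x = .a2 ∨ x = .a3) := by
  constructor
  · rintro ⟨hx, y, z, hy, hz, hyz, hxy, hxz, hall⟩
    cases x with
    | v i => exact absurd (dom_v i) hx
    | b1 => exact absurd (dom_b1 hn) hx
    | b2 => exact absurd (dom_b2 hn) hx
    | b3 => exact absurd (dom_b3 hn) hx
    | a1 => exact Or.inl rfl
    | a2 => exact Or.inr (Or.inl rfl)
    | a3 => exact Or.inr (Or.inr rfl)
    | c i =>
      have h1 := hall .d1 not_dom_d1 (by simp [adj_iff, gammaRel'])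
      have h2 := hall .d2 not_dom_d2 (by simp [adj_iff, gammaRel'])
      have h3 := hall .d3 not_dom_d3 (by simp [adj_iff, gammaRel'])
      rcases h1 with h1 | h1 <;> rcases h2 with h2 | h2 <;> rcases h3 with h3 | h3 <;>
        subst_vars <;> simp_all
    | d1 =>
      have h1 := hall (.c ⟨0, by omega⟩) (not_dom_c _) (by simp [adj_iff, gammaRel'])
      have h2 := hall (.c ⟨1, by omega⟩) (not_dom_c _) (by simp [adj_iff, gammaRel'])
      have h3 := hall (.c ⟨2, by omega⟩) (not_dom_c _) (by simp [adj_iff, gammaRel'])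
      rcases h1 with h1 | h1 <;> rcases h2 with h2 | h2 <;> rcases h3 with h3 | h3 <;>
        subst_vars <;> simp_all
    | d2 =>
      have h1 := hall (.c ⟨0, by omega⟩) (not_dom_c _) (by simp [adj_iff, gammaRel'])
      have h2 := hall (.c ⟨1, by omega⟩) (not_dom_c _) (by simp [adj_iff, gammaRel'])
      have h3 := hall (.c ⟨2, by omega⟩) (not_dom_c _) (by simp [adj_iff, gammaRel'])
      rcases h1 with h1 | h1 <;> rcases h2 with h2 | h2 <;> rcases h3 with h3 | h3 <;>
        subst_vars <;> simp_all
    | d3 =>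
      have h1 := hall (.c ⟨0, by omega⟩) (not_dom_c _) (by simp [adj_iff, gammaRel'])
      have h2 := hall (.c ⟨1, by omega⟩) (not_dom_c _) (by simp [adj_iff, gammaRel'])
      have h3 := hall (.c ⟨2, by omega⟩) (not_dom_c _) (by simp [adj_iff, gammaRel'])
      rcases h1 with h1 | h1 <;> rcases h2 with h2 | h2 <;> rcases h3 with h3 | h3 <;>
        subst_vars <;> simp_all
  · rintro (rfl | rfl | rfl)
    · refine ⟨not_dom_a1 hn, .a2, .a3, not_dom_a2 hn, not_dom_a3 hn, by simp,
        by simp [adj_iff, gammaRel'], by simp [adj_iff, gammaRel'], ?_⟩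
      intro w hw haw
      cases w with
      | a2 => exact Or.inl rfl
      | a3 => exact Or.inr rfl
      | b1 => exact absurd (dom_b1 hn) hw
      | v i => simp [adj_iff, gammaRel'] at haw
      | a1 => simp [adj_iff, gammaRel'] at haw
      | b2 => simp [adj_iff, gammaRel'] at haw
      | b3 => simp [adj_iff, gammaRel'] at haw
      | c i => simp [adj_iff, gammaRel'] at haw
      | d1 => simp [adj_iff, gammaRel'] at haw
      | d2 => simp [adj_iff, gammaRel'] at haw
      | d3 => simp [adj_iff, gammaRel'] at haw
    · refine ⟨not_dom_a2 hn, .a1, .a3, not_dom_a1 hn, not_dom_a3 hn, by simp,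
        by simp [adj_iff, gammaRel'], by simp [adj_iff, gammaRel'], ?_⟩
      intro w hw haw
      cases w with
      | a1 => exact Or.inl rfl
      | a3 => exact Or.inr rfl
      | b2 => exact absurd (dom_b2 hn) hw
      | v i => simp [adj_iff, gammaRel'] at haw
      | a2 => simp [adj_iff, gammaRel'] at haw
      | b1 => simp [adj_iff, gammaRel'] at haw
      | b3 => simp [adj_iff, gammaRel'] at haw
      | c i => simp [adj_iff, gammaRel'] at haw
      | d1 => simp [adj_iff, gammaRel'] at haw
      | d2 => simp [adj_iff, gammaRel'] at haw
      | d3 => simp [adj_iff, gammaRel'] at haw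
    · refine ⟨not_dom_a3 hn, .a1, .a2, not_dom_a1 hn, not_dom_a2 hn, by simp,
        by simp [adj_iff, gammaRel'], by simp [adj_iff, gammaRel'], ?_⟩
      intro w hw haw
      cases w with
      | a1 => exact Or.inl rfl
      | a2 => exact Or.inr rfl
      | b3 => exact absurd (dom_b3 hn) hw
      | v i => simp [adj_iff, gammaRel'] at haw
      | a3 => simp [adj_iff, gammaRel'] at haw
      | b1 => simp [adj_iff, gammaRel'] at haw
      | b2 => simp [adj_iff, gammaRel'] at haw
      | c i => simp [adj_iff, gammaRel'] at haw
      | d1 => simp [adj_iff, gammaRel'] at haw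
      | d2 => simp [adj_iff, gammaRel'] at haw
      | d3 => simp [adj_iff, gammaRel'] at haw

lemma dom_map (φ : GammaGraph' Λ ≃g GammaGraph' Λ) (x : GV' n) (h : Dom Λ x) :
    Dom Λ (φ x) := by
  intro y hy
  obtain ⟨y', rfl⟩ := φ.surjective y
  rcases h y' (fun hh => hy (by rw [hh])) with ha | ⟨z, h1, h2⟩
  · exact Or.inl (φ.map_adj_iff.2 ha)
  · exact Or.inr ⟨φ z, φ.map_adj_iff.2 h1, φ.map_adj_iff.2 h2⟩

lemma dom_map_iff (φ : GammaGraph' Λ ≃g GammaGraph' Λ) (x : GV' n) :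
    Dom Λ (φ x) ↔ Dom Λ x := by
  refine ⟨fun h => ?_, dom_map φ x⟩
  have := dom_map φ.symm (φ x) h
  rwa [φ.symm_apply_apply] at this

lemma inA_map (φ : GammaGraph' Λ ≃g GammaGraph' Λ) (x : GV' n) (h : InA Λ x) :
    InA Λ (φ x) := by
  obtain ⟨hx, y, z, hy, hz, hyz, hxy, hxz, hall⟩ := h
  refine ⟨fun hd => hx ((dom_map_iff φ x).1 hd), φ y, φ z,
    fun hd => hy ((dom_map_iff φ y).1 hd), fun hd => hz ((dom_map_iff φ z).1 hd),
    fun hh => hyz (φ.injective hh), φ.map_adj_iff.2 hxy, φ.map_adj_iff.2 hxz, ?_⟩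
  intro w hw haw
  obtain ⟨w', rfl⟩ := φ.surjective w
  rcases hall w' (fun hh => hw (dom_map φ w' hh)) (φ.map_adj_iff.1 haw) with h | h
  · exact Or.inl (congrArg φ h)
  · exact Or.inr (congrArg φ h)

lemma inA_map_iff (φ : GammaGraph' Λ ≃g GammaGraph' Λ) (x : GV' n) :
    InA Λ (φ x) ↔ InA Λ x := by
  refine ⟨fun h => ?_, inA_map φ x⟩
  have := inA_map φ.symm (φ x) h
  rwa [φ.symm_apply_apply] at this


def PB (Λ : SimpleGraph (Fin n)) (x : GV' n) : Prop :=
  Dom Λ x ∧ ∃ y, InA Λ y ∧ (GammaGraph' Λ).Adj x y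

def PV (Λ : SimpleGraph (Fin n)) (x : GV' n) : Prop :=
  Dom Λ x ∧ ¬ ∃ y, InA Λ y ∧ (GammaGraph' Λ).Adj x y

def PDst (Λ : SimpleGraph (Fin n)) (x : GV' n) : Prop :=
  ¬ Dom Λ x ∧ ¬ InA Λ x

def PDB (Λ : SimpleGraph (Fin n)) (x : GV' n) : Prop :=
  PDst Λ x ∧ ∃ y, PB Λ y ∧ (GammaGraph' Λ).Adj x y

def PC (Λ : SimpleGraph (Fin n)) (x : GV' n) : Prop :=
  PDst Λ x ∧ ∃ y z, PDB Λ y ∧ PDB Λ z ∧ y ≠ z ∧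
    (GammaGraph' Λ).Adj x y ∧ (GammaGraph' Λ).Adj x z

lemma pb_iff (hn : 3 ≤ n) (x : GV' n) :
    PB Λ x ↔ (x = .b1 ∨ x = .b2 ∨ x = .b3) := by
  constructor
  · rintro ⟨hd, y, hy, ha⟩
    rw [inA_iff hn] at hy
    cases x with
    | b1 => exact Or.inl rfl
    | b2 => exact Or.inr (Or.inl rfl)
    | b3 => exact Or.inr (Or.inr rfl)
    | v i => rcases hy with rfl | rfl | rfl <;> simp [adj_iff, gammaRel'] at ha
    | a1 => exact absurd hd (not_dom_a1 hn)
    | a2 => exact absurd hd (not_dom_a2 hn)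
    | a3 => exact absurd hd (not_dom_a3 hn)
    | c i => exact absurd hd (not_dom_c i)
    | d1 => exact absurd hd not_dom_d1
    | d2 => exact absurd hd not_dom_d2
    | d3 => exact absurd hd not_dom_d3
  · rintro (rfl | rfl | rfl)
    · exact ⟨dom_b1 hn, .a1, (inA_iff hn _).2 (Or.inl rfl), by simp [adj_iff, gammaRel']⟩
    · exact ⟨dom_b2 hn, .a2, (inA_iff hn _).2 (Or.inr (Or.inl rfl)),
        by simp [adj_iff, gammaRel']⟩
    · exact ⟨dom_b3 hn, .a3, (inA_iff hn _).2 (Or.inr (Or.inr rfl)),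
        by simp [adj_iff, gammaRel']⟩

lemma pv_iff (hn : 3 ≤ n) (x : GV' n) :
    PV Λ x ↔ ∃ i, x = .v i := by
  constructor
  · rintro ⟨hd, hne⟩
    cases x with
    | v i => exact ⟨i, rfl⟩
    | b1 => exact absurd ⟨.a1, (inA_iff hn _).2 (Or.inl rfl),
        by simp [adj_iff, gammaRel']⟩ hne
    | b2 => exact absurd ⟨.a2, (inA_iff hn _).2 (Or.inr (Or.inl rfl)),
        by simp [adj_iff, gammaRel']⟩ hne
    | b3 => exact absurd ⟨.a3, (inA_iff hn _).2 (Or.inr (Or.inr rfl)),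
        by simp [adj_iff, gammaRel']⟩ hne
    | a1 => exact absurd hd (not_dom_a1 hn)
    | a2 => exact absurd hd (not_dom_a2 hn)
    | a3 => exact absurd hd (not_dom_a3 hn)
    | c i => exact absurd hd (not_dom_c i)
    | d1 => exact absurd hd not_dom_d1
    | d2 => exact absurd hd not_dom_d2
    | d3 => exact absurd hd not_dom_d3
  · rintro ⟨i, rfl⟩
    refine ⟨dom_v i, ?_⟩
    rintro ⟨y, hy, ha⟩
    rw [inA_iff hn] at hy
    rcases hy with rfl | rfl | rfl <;> simp [adj_iff, gammaRel'] at ha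

lemma pdst_iff (hn : 3 ≤ n) (x : GV' n) :
    PDst Λ x ↔ ((∃ i, x = .c i) ∨ x = .d1 ∨ x = .d2 ∨ x = .d3) := by
  constructor
  · rintro ⟨h1, h2⟩
    cases x with
    | c i => exact Or.inl ⟨i, rfl⟩
    | d1 => exact Or.inr (Or.inl rfl)
    | d2 => exact Or.inr (Or.inr (Or.inl rfl))
    | d3 => exact Or.inr (Or.inr (Or.inr rfl))
    | v i => exact absurd (dom_v i) h1
    | b1 => exact absurd (dom_b1 hn) h1
    | b2 => exact absurd (dom_b2 hn) h1
    | b3 => exact absurd (dom_b3 hn) h1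
    | a1 => exact absurd ((inA_iff hn _).2 (Or.inl rfl)) h2
    | a2 => exact absurd ((inA_iff hn _).2 (Or.inr (Or.inl rfl))) h2
    | a3 => exact absurd ((inA_iff hn _).2 (Or.inr (Or.inr rfl))) h2
  · rintro (⟨i, rfl⟩ | rfl | rfl | rfl)
    · exact ⟨not_dom_c i, fun hA => by
        rw [inA_iff hn] at hA; rcases hA with h | h | h <;> simp at h⟩
    · exact ⟨not_dom_d1, fun hA => by
        rw [inA_iff hn] at hA; rcases hA with h | h | h <;> simp at h⟩
    · exact ⟨not_dom_d2, fun hA => by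
        rw [inA_iff hn] at hA; rcases hA with h | h | h <;> simp at h⟩
    · exact ⟨not_dom_d3, fun hA => by
        rw [inA_iff hn] at hA; rcases hA with h | h | h <;> simp at h⟩

lemma pdb_iff (hn : 3 ≤ n) (x : GV' n) :
    PDB Λ x ↔ (x = .d1 ∨ x = .d3) := by
  constructor
  · rintro ⟨hdst, y, hy, ha⟩
    rw [pb_iff hn] at hy
    rcases (pdst_iff hn x).1 hdst with ⟨i, rfl⟩ | rfl | rfl | rfl <;>
      rcases hy with rfl | rfl | rfl <;> simp [adj_iff, gammaRel'] at ha ⊢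
  · rintro (rfl | rfl)
    · exact ⟨(pdst_iff hn _).2 (by simp), .b1, (pb_iff hn _).2 (Or.inl rfl),
        by simp [adj_iff, gammaRel']⟩
    · exact ⟨(pdst_iff hn _).2 (by simp), .b3, (pb_iff hn _).2 (Or.inr (Or.inr rfl)),
        by simp [adj_iff, gammaRel']⟩

lemma pc_iff (hn : 3 ≤ n) (x : GV' n) :
    PC Λ x ↔ ∃ i, x = .c i := by
  constructor
  · rintro ⟨hdst, y, z, hy, hz, hyz, hay, haz⟩
    rw [pdb_iff hn] at hy hz
    rcases (pdst_iff hn x).1 hdst with ⟨i, rfl⟩ | rfl | rfl | rfl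
    · exact ⟨i, rfl⟩
    all_goals rcases hy with rfl | rfl <;> rcases hz with rfl | rfl <;>
      simp_all [adj_iff, gammaRel']
  · rintro ⟨i, rfl⟩
    exact ⟨(pdst_iff hn _).2 (Or.inl ⟨i, rfl⟩), .d1, .d3,
      (pdb_iff hn _).2 (Or.inl rfl), (pdb_iff hn _).2 (Or.inr rfl), by simp,
      by simp [adj_iff, gammaRel'], by simp [adj_iff, gammaRel']⟩

lemma ex_adj_map (φ : GammaGraph' Λ ≃g GammaGraph' Λ) (P : GV' n → Prop)
    (hP : ∀ w, P (φ w) ↔ P w) (x : GV' n) :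
    (∃ y, P y ∧ (GammaGraph' Λ).Adj (φ x) y) ↔ (∃ y, P y ∧ (GammaGraph' Λ).Adj x y) := by
  constructor
  · rintro ⟨y, hy, ha⟩
    obtain ⟨y', rfl⟩ := φ.surjective y
    exact ⟨y', (hP y').1 hy, φ.map_adj_iff.1 ha⟩
  · rintro ⟨y, hy, ha⟩
    exact ⟨φ y, (hP y).2 hy, φ.map_adj_iff.2 ha⟩

lemma ex2_adj_map (φ : GammaGraph' Λ ≃g GammaGraph' Λ) (P : GV' n → Prop)
    (hP : ∀ w, P (φ w) ↔ P w) (x : GV' n) :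
    (∃ y z, P y ∧ P z ∧ y ≠ z ∧ (GammaGraph' Λ).Adj (φ x) y ∧ (GammaGraph' Λ).Adj (φ x) z) ↔
      (∃ y z, P y ∧ P z ∧ y ≠ z ∧ (GammaGraph' Λ).Adj x y ∧ (GammaGraph' Λ).Adj x z) := by
  constructor
  · rintro ⟨y, z, hy, hz, hyz, h1, h2⟩
    obtain ⟨y', rfl⟩ := φ.surjective y
    obtain ⟨z', rfl⟩ := φ.surjective z
    exact ⟨y', z', (hP y').1 hy, (hP z').1 hz, fun hh => hyz (by rw [hh]),
      φ.map_adj_iff.1 h1, φ.map_adj_iff.1 h2⟩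
  · rintro ⟨y, z, hy, hz, hyz, h1, h2⟩
    exact ⟨φ y, φ z, (hP y).2 hy, (hP z).2 hz, fun hh => hyz (φ.injective hh),
      φ.map_adj_iff.2 h1, φ.map_adj_iff.2 h2⟩

end Gamma15

open Gamma15 in
/-- For `Λ` with `n ≥ 3` vertices, `Γ'(Λ)` has no non-trivial graph
automorphisms. -/
theorem gammaGraph'_no_nontrivial_automorphisms
    (n : ℕ) (hn : 3 ≤ n) (Λ : SimpleGraph (Fin n)) :
    ∀ φ : GammaGraph' Λ ≃g GammaGraph' Λ, ∀ x : GV' n, φ x = x := by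
  intro φ
  have hDom : ∀ x, Dom Λ (φ x) ↔ Dom Λ x := dom_map_iff φ
  have hA : ∀ x, InA Λ (φ x) ↔ InA Λ x := inA_map_iff φ
  have hPB : ∀ x, PB Λ (φ x) ↔ PB Λ x := fun x =>
    and_congr (hDom x) (ex_adj_map φ _ hA x)
  have hPV : ∀ x, PV Λ (φ x) ↔ PV Λ x := fun x =>
    and_congr (hDom x) (not_congr (ex_adj_map φ _ hA x))
  have hPDst : ∀ x, PDst Λ (φ x) ↔ PDst Λ x := fun x =>
    and_congr (not_congr (hDom x)) (not_congr (hA x))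
  have hPDB : ∀ x, PDB Λ (φ x) ↔ PDB Λ x := fun x =>
    and_congr (hPDst x) (ex_adj_map φ _ hPB x)
  have hPC : ∀ x, PC Λ (φ x) ↔ PC Λ x := fun x =>
    and_congr (hPDst x) (ex2_adj_map φ _ hPDB x)
  have hd2 : φ .d2 = .d2 := by
    have h1 : PDst Λ (φ (.d2 : GV' n)) := (hPDst _).2 ((pdst_iff hn _).2 (by simp))
    rcases (pdst_iff hn _).1 h1 with ⟨i, hi⟩ | hi | hi | hi
    · have h3 : PC Λ (GV'.d2 : GV' n) := (hPC _).1 ((pc_iff hn _).2 ⟨i, hi⟩)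
      obtain ⟨j, hj⟩ := (pc_iff hn _).1 h3
      simp at hj
    · have h3 : PDB Λ (GV'.d2 : GV' n) := (hPDB _).1 ((pdb_iff hn _).2 (Or.inl hi))
      rcases (pdb_iff hn _).1 h3 with h | h <;> simp at h
    · exact hi
    · have h3 : PDB Λ (GV'.d2 : GV' n) := (hPDB _).1 ((pdb_iff hn _).2 (Or.inr hi))
      rcases (pdb_iff hn _).1 h3 with h | h <;> simp at h
  have hd3 : φ .d3 = .d3 := by
    have h1 : PDB Λ (φ (.d3 : GV' n)) := (hPDB _).2 ((pdb_iff hn _).2 (Or.inr rfl))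
    have h2 : (GammaGraph' Λ).Adj (φ .d3) (.d2 : GV' n) := by
      rw [← hd2]; exact φ.map_adj_iff.2 (by simp [adj_iff, gammaRel'])
    rcases (pdb_iff hn _).1 h1 with hi | hi
    · rw [hi] at h2; simp [adj_iff, gammaRel'] at h2
    · exact hi
  have hd1 : φ .d1 = .d1 := by
    have h1 : PDB Λ (φ (.d1 : GV' n)) := (hPDB _).2 ((pdb_iff hn _).2 (Or.inl rfl))
    rcases (pdb_iff hn _).1 h1 with hi | hi
    · exact hi
    · have := φ.injective (hi.trans hd3.symm); simp at this
  have hb1 : φ .b1 = .b1 := by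
    have h1 : PB Λ (φ (.b1 : GV' n)) := (hPB _).2 ((pb_iff hn _).2 (Or.inl rfl))
    have h2 : (GammaGraph' Λ).Adj (φ .b1) (.d1 : GV' n) := by
      rw [← hd1]; exact φ.map_adj_iff.2 (by simp [adj_iff, gammaRel'])
    rcases (pb_iff hn _).1 h1 with hi | hi | hi
    · exact hi
    · rw [hi] at h2; simp [adj_iff, gammaRel'] at h2
    · rw [hi] at h2; simp [adj_iff, gammaRel'] at h2
  have hb3 : φ .b3 = .b3 := by
    have h1 : PB Λ (φ (.b3 : GV' n)) := (hPB _).2 ((pb_iff hn _).2 (Or.inr (Or.inr rfl)))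
    have h2 : (GammaGraph' Λ).Adj (φ .b3) (.d3 : GV' n) := by
      rw [← hd3]; exact φ.map_adj_iff.2 (by simp [adj_iff, gammaRel'])
    rcases (pb_iff hn _).1 h1 with hi | hi | hi
    · rw [hi] at h2; simp [adj_iff, gammaRel'] at h2
    · rw [hi] at h2; simp [adj_iff, gammaRel'] at h2
    · exact hi
  have hb2 : φ .b2 = .b2 := by
    have h1 : PB Λ (φ (.b2 : GV' n)) := (hPB _).2 ((pb_iff hn _).2 (Or.inr (Or.inl rfl)))
    rcases (pb_iff hn _).1 h1 with hi | hi | hi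
    · have := φ.injective (hi.trans hb1.symm); simp at this
    · exact hi
    · have := φ.injective (hi.trans hb3.symm); simp at this
  have ha1 : φ .a1 = .a1 := by
    have h1 : InA Λ (φ (.a1 : GV' n)) := (hA _).2 ((inA_iff hn _).2 (Or.inl rfl))
    have h2 : (GammaGraph' Λ).Adj (φ .a1) (.b1 : GV' n) := by
      rw [← hb1]; exact φ.map_adj_iff.2 (by simp [adj_iff, gammaRel'])
    rcases (inA_iff hn _).1 h1 with hi | hi | hi
    · exact hi
    · rw [hi] at h2; simp [adj_iff, gammaRel'] at h2
    · rw [hi] at h2; simp [adj_iff, gammaRel'] at h2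
  have ha2 : φ .a2 = .a2 := by
    have h1 : InA Λ (φ (.a2 : GV' n)) := (hA _).2 ((inA_iff hn _).2 (Or.inr (Or.inl rfl)))
    have h2 : (GammaGraph' Λ).Adj (φ .a2) (.b2 : GV' n) := by
      rw [← hb2]; exact φ.map_adj_iff.2 (by simp [adj_iff, gammaRel'])
    rcases (inA_iff hn _).1 h1 with hi | hi | hi
    · rw [hi] at h2; simp [adj_iff, gammaRel'] at h2
    · exact hi
    · rw [hi] at h2; simp [adj_iff, gammaRel'] at h2
  have ha3 : φ .a3 = .a3 := by
    have h1 : InA Λ (φ (.a3 : GV' n)) := (hA _).2 ((inA_iff hn _).2 (Or.inr (Or.inr rfl)))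
    have h2 : (GammaGraph' Λ).Adj (φ .a3) (.b3 : GV' n) := by
      rw [← hb3]; exact φ.map_adj_iff.2 (by simp [adj_iff, gammaRel'])
    rcases (inA_iff hn _).1 h1 with hi | hi | hi
    · rw [hi] at h2; simp [adj_iff, gammaRel'] at h2
    · rw [hi] at h2; simp [adj_iff, gammaRel'] at h2
    · exact hi
  have hv0 : φ (.v ⟨0, by omega⟩) = .v ⟨0, by omega⟩ := by
    have h1 : PV Λ (φ (.v ⟨0, by omega⟩ : GV' n)) := (hPV _).2 ((pv_iff hn _).2 ⟨_, rfl⟩)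
    have h2 : (GammaGraph' Λ).Adj (φ (.v ⟨0, by omega⟩)) (.d1 : GV' n) := by
      rw [← hd1]; exact φ.map_adj_iff.2 (by simp [adj_iff, gammaRel'])
    obtain ⟨i, hi⟩ := (pv_iff hn _).1 h1
    rw [hi] at h2
    have h3 : (i : ℕ) = 0 := by simpa [adj_iff, gammaRel'] using h2
    rw [hi]; congr 1; exact Fin.ext h3
  have hv1 : φ (.v ⟨1, by omega⟩) = .v ⟨1, by omega⟩ := by
    have h1 : PV Λ (φ (.v ⟨1, by omega⟩ : GV' n)) := (hPV _).2 ((pv_iff hn _).2 ⟨_, rfl⟩)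
    have h2 : (GammaGraph' Λ).Adj (φ (.v ⟨1, by omega⟩)) (.d2 : GV' n) := by
      rw [← hd2]; exact φ.map_adj_iff.2 (by simp [adj_iff, gammaRel'])
    obtain ⟨i, hi⟩ := (pv_iff hn _).1 h1
    rw [hi] at h2
    have h3 : (i : ℕ) = 1 := by simpa [adj_iff, gammaRel'] using h2
    rw [hi]; congr 1; exact Fin.ext h3
  have hc0 : φ (.c ⟨0, by omega⟩) = .c ⟨0, by omega⟩ := by
    have h1 : PC Λ (φ (.c ⟨0, by omega⟩ : GV' n)) := (hPC _).2 ((pc_iff hn _).2 ⟨_, rfl⟩)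
    obtain ⟨j, hj⟩ := (pc_iff hn _).1 h1
    have h2 : (GammaGraph' Λ).Adj (φ (.c ⟨0, by omega⟩)) (.v ⟨0, by omega⟩ : GV' n) := by
      rw [← hv0]; exact φ.map_adj_iff.2 (by simp [adj_iff, gammaRel'])
    have h3 : (GammaGraph' Λ).Adj (φ (.c ⟨0, by omega⟩)) (.v ⟨1, by omega⟩ : GV' n) := by
      rw [← hv1]
      exact φ.map_adj_iff.2 (by
        simp [adj_iff, gammaRel', Nat.mod_eq_of_lt (show 1 < n by omega)])
    rw [hj] at h2 h3
    simp [adj_iff, gammaRel', Fin.ext_iff] at h2 h3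
    have hjlt := j.isLt
    have h7 : ((j:ℕ)+1) % n = (j:ℕ)+1 ∨ ((j:ℕ)+1 = n ∧ ((j:ℕ)+1) % n = 0) := by
      rcases Nat.lt_or_ge ((j:ℕ)+1) n with h | h
      · exact Or.inl (Nat.mod_eq_of_lt h)
      · right
        have h8 : (j:ℕ)+1 = n := by omega
        simp [h8]
    have hj0 : (j : ℕ) = 0 := by omega
    rw [hj]; congr 1; exact Fin.ext hj0
  have hmain : ∀ k, ∀ hk : k < n, φ (.v ⟨k, hk⟩) = .v ⟨k, hk⟩ ∧ φ (.c ⟨k, hk⟩) = .c ⟨k, hk⟩ := by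
    intro k
    induction k with
    | zero => intro hk; exact ⟨hv0, hc0⟩
    | succ k ih =>
      intro hk
      obtain ⟨hv, hc⟩ := ih (by omega)
      have hvk : φ (.v ⟨k + 1, hk⟩) = .v ⟨k + 1, hk⟩ := by
        have h1 : PV Λ (φ (.v ⟨k + 1, hk⟩ : GV' n)) := (hPV _).2 ((pv_iff hn _).2 ⟨_, rfl⟩)
        have h2 : (GammaGraph' Λ).Adj (φ (.v ⟨k + 1, hk⟩)) (.c ⟨k, by omega⟩ : GV' n) := by
          rw [← hc]
          exact φ.map_adj_iff.2 (by
            simp [adj_iff, gammaRel', Nat.mod_eq_of_lt hk])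
        obtain ⟨i, hi⟩ := (pv_iff hn _).1 h1
        have hne : (i : ℕ) ≠ k := by
          intro hh
          have h4 : φ (.v ⟨k + 1, hk⟩ : GV' n) = φ (.v ⟨k, by omega⟩) := by
            rw [hi, hv]; congr 1; exact Fin.ext hh
          have h5 := φ.injective h4
          simp [Fin.ext_iff] at h5
        rw [hi] at h2
        simp [adj_iff, gammaRel', Fin.ext_iff, Nat.mod_eq_of_lt hk] at h2
        have h6 : (i : ℕ) = k + 1 := by omega
        rw [hi]; congr 1; exact Fin.ext h6
      have hck : φ (.c ⟨k + 1, hk⟩) = .c ⟨k + 1, hk⟩ := by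
        have h1 : PC Λ (φ (.c ⟨k + 1, hk⟩ : GV' n)) := (hPC _).2 ((pc_iff hn _).2 ⟨_, rfl⟩)
        obtain ⟨j, hj⟩ := (pc_iff hn _).1 h1
        have h2 : (GammaGraph' Λ).Adj (φ (.c ⟨k + 1, hk⟩)) (.v ⟨k + 1, hk⟩ : GV' n) := by
          rw [← hvk]; exact φ.map_adj_iff.2 (by simp [adj_iff, gammaRel'])
        have hne : (j : ℕ) ≠ k := by
          intro hh
          have h4 : φ (.c ⟨k + 1, hk⟩ : GV' n) = φ (.c ⟨k, by omega⟩) := by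
            rw [hj, hc]; congr 1; exact Fin.ext hh
          have h5 := φ.injective h4
          simp [Fin.ext_iff] at h5
        rw [hj] at h2
        simp [adj_iff, gammaRel', Fin.ext_iff] at h2
        have hjlt := j.isLt
        have h7 : ((j:ℕ)+1) % n = (j:ℕ)+1 ∨ ((j:ℕ)+1 = n ∧ ((j:ℕ)+1) % n = 0) := by
          rcases Nat.lt_or_ge ((j:ℕ)+1) n with h | h
          · exact Or.inl (Nat.mod_eq_of_lt h)
          · right
            have h8 : (j:ℕ)+1 = n := by omega
            simp [h8]
        have h6 : (j : ℕ) = k + 1 := by omega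
        rw [hj]; congr 1; exact Fin.ext h6
      exact ⟨hvk, hck⟩
  intro x
  cases x with
  | v i => exact (hmain i.1 i.2).1
  | c i => exact (hmain i.1 i.2).2
  | a1 => exact ha1
  | a2 => exact ha2
  | a3 => exact ha3
  | b1 => exact hb1
  | b2 => exact hb2
  | b3 => exact hb3
  | d1 => exact hd1
  | d2 => exact hd2
  | d3 => exact hd3
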